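/- arXiv:1905.09997 — 6 statements merged into one kernel-verified Lean document; each statement's English description precedes it below -/
import Mathlib

section
/- Let f_i : R^d → R be μ_i-strongly convex (possibly μ_i = 0, i.e., convex) and suppose w* minimizes f_i (interpolation: f_i(w*) ≤ f_i(w) for all w). Consider one step w⁺ = w - η∇f_i(w) where η > 0 satisfies the Armijo condition f_i(w⁺) ≤ f_i(w) - c·η·‖∇f_i(w)‖² with c ≥ 1/2. Then ‖w⁺ - w*‖² ≤ (1 - μ_i·η)·‖w - w*‖². -/
open scoped RealInnerProductSpace

/-- One SGD step with Armijo line-search (c ≥ 1/2) on a μ-strongly convex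
function f minimized at w* contracts the distance to w*:
‖w⁺ - w*‖² ≤ (1 - μη)‖w - w*‖². -/
theorem armijo_sls_stmt4 {d : ℕ} (f : EuclideanSpace ℝ (Fin d) → ℝ)
    (g : EuclideanSpace ℝ (Fin d) → EuclideanSpace ℝ (Fin d))
    (μ : ℝ) (hμ : 0 ≤ μ)
    (hgrad : ∀ x, HasGradientAt f (g x) x)
    (hsc : ∀ u v, f v ≥ f u + ⟪g u, v - u⟫ + (μ / 2) * ‖v - u‖ ^ 2)
    (wstar : EuclideanSpace ℝ (Fin d)) (hmin : ∀ w, f wstar ≤ f w)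
    (w : EuclideanSpace ℝ (Fin d)) (η c : ℝ) (hη : 0 < η) (hc : (1:ℝ)/2 ≤ c)
    (harmijo : f (w - η • g w) ≤ f w - c * η * ‖g w‖ ^ 2) :
    ‖(w - η • g w) - wstar‖ ^ 2 ≤ (1 - μ * η) * ‖w - wstar‖ ^ 2 := by
  have hsc1 := hsc w wstar
  have hinner : ⟪g w, wstar - w⟫ = -⟪g w, w - wstar⟫ := by
    rw [← inner_neg_right]; congr 1; abel
  have hnormsym : ‖wstar - w‖ = ‖w - wstar‖ := norm_sub_rev _ _
  have h1 : f w - f wstar + (μ/2) * ‖w - wstar‖ ^ 2 ≤ ⟪g w, w - wstar⟫ := by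
    rw [hinner, hnormsym] at hsc1; linarith
  have hg2 : 0 ≤ ‖g w‖ ^ 2 := sq_nonneg _
  have h2 : (1/2) * η * ‖g w‖ ^ 2 ≤ f w - f wstar := by
    have := hmin (w - η • g w)
    nlinarith [mul_le_mul_of_nonneg_right hc (mul_nonneg hη.le hg2)]
  have hexp : ‖(w - η • g w) - wstar‖ ^ 2
      = ‖w - wstar‖ ^ 2 - 2 * η * ⟪g w, w - wstar⟫ + η ^ 2 * ‖g w‖ ^ 2 := by
    have : (w - η • g w) - wstar = (w - wstar) - η • g w := by abel
    rw [this, norm_sub_sq_real, real_inner_smul_right, norm_smul,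
      real_inner_comm]
    simp [abs_of_pos hη, mul_pow]
    ring
  rw [hexp]
  nlinarith [mul_le_mul_of_nonneg_left h2 hη.le, mul_nonneg hμ (sq_nonneg ‖w - wstar‖)]
end

section
/- Let f_i : R^d → R be convex and differentiable, with w* a global minimizer of f_i. Consider one step w⁺ = w - η∇f_i(w) with η > 0 satisfying the Armijo condition f_i(w⁺) ≤ f_i(w) - c·η·‖∇f_i(w)‖² for some c > 1/2. Then f_i(w) - f_i(w*) ≤ (c/(2c-1))·(1/η)·(‖w - w*‖² - ‖w⁺ - w*‖²). -/
open scoped RealInnerProductSpace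

lemma convex_grad_ineq {d : ℕ} (f : EuclideanSpace ℝ (Fin d) → ℝ)
    (hconv : ConvexOn ℝ Set.univ f) (x G : EuclideanSpace ℝ (Fin d))
    (hgrad : HasGradientAt f G x) (y : EuclideanSpace ℝ (Fin d)) :
    ⟪G, y - x⟫ ≤ f y - f x := by
  set γ : ℝ → EuclideanSpace ℝ (Fin d) := fun t => x + t • (y - x) with hγ
  have hγd : HasDerivAt γ (y - x) 0 := by
    have : HasDerivAt (fun t : ℝ => t • (y - x)) ((1:ℝ) • (y - x)) 0 :=
      (hasDerivAt_id 0).smul_const (y - x)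
    simpa [γ] using this.const_add x
  have hf' : HasFDerivAt f ((InnerProductSpace.toDual ℝ _) G) x := hgrad
  have hcomp : HasDerivAt (f ∘ γ) (⟪G, y - x⟫) 0 := by
    have hx0 : γ 0 = x := by simp [γ]
    have := (hx0 ▸ hf' : HasFDerivAt f ((InnerProductSpace.toDual ℝ _) G) (γ 0)).comp_hasDerivAt 0 hγd
    simpa using this
  have hconv' : ConvexOn ℝ Set.univ (f ∘ γ) := by
    have : ConvexOn ℝ ((AffineMap.lineMap x y : ℝ →ᵃ[ℝ] _) ⁻¹' Set.univ) (f ∘ (AffineMap.lineMap x y)) := by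
      exact hconv.comp_affineMap (AffineMap.lineMap x y)
    have heq : (f ∘ (AffineMap.lineMap x y)) = f ∘ γ := by
      funext t; simp only [Function.comp_apply]; congr 1
      simp [γ, AffineMap.lineMap_apply]; module
    simpa [heq] using this
  have := hconv'.le_slope_of_hasDerivAt (Set.mem_univ 0) (Set.mem_univ 1) one_pos hcomp
  simpa [slope_def_field, γ] using this

/-- One SGD step with Armijo line-search (c > 1/2) on a convex function f
minimized at w* satisfies
f(w) - f(w*) ≤ (c/(2c-1))·(1/η)·(‖w - w*‖² - ‖w⁺ - w*‖²). -/
theorem armijo_sls_stmt5 {d : ℕ} (f : EuclideanSpace ℝ (Fin d) → ℝ)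
    (g : EuclideanSpace ℝ (Fin d) → EuclideanSpace ℝ (Fin d))
    (hgrad : ∀ x, HasGradientAt f (g x) x)
    (hconv : ConvexOn ℝ Set.univ f)
    (wstar : EuclideanSpace ℝ (Fin d)) (hmin : ∀ w, f wstar ≤ f w)
    (w : EuclideanSpace ℝ (Fin d)) (η c : ℝ) (hη : 0 < η) (hc : (1:ℝ)/2 < c)
    (harmijo : f (w - η • g w) ≤ f w - c * η * ‖g w‖ ^ 2) :
    f w - f wstar ≤
      (c / (2 * c - 1)) * (1 / η) *
        (‖w - wstar‖ ^ 2 - ‖(w - η • g w) - wstar‖ ^ 2) := by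
  set G := g w with hG
  set wp := w - η • G with hwp
  -- convexity inequality
  have hconv1 : ⟪G, wstar - w⟫ ≤ f wstar - f w :=
    convex_grad_ineq f hconv w G (hgrad w) wstar
  have hI : f w - f wstar ≤ ⟪G, w - wstar⟫ := by
    have heq : ⟪G, w - wstar⟫ = -⟪G, wstar - w⟫ := by
      rw [← inner_neg_right]; congr 1; abel
    rw [heq]; linarith
  -- norm expansion
  have hexp : ‖wp - wstar‖ ^ 2
      = ‖w - wstar‖ ^ 2 - 2 * η * ⟪G, w - wstar⟫ + η ^ 2 * ‖G‖ ^ 2 := by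
    have h1 : wp - wstar = (w - wstar) - η • G := by rw [hwp]; abel
    rw [h1, norm_sub_sq_real, real_inner_smul_right, norm_smul,
      real_inner_comm]
    simp [mul_pow, abs_of_pos hη]
    ring
  -- Armijo + optimality
  have hA : c * η * ‖G‖ ^ 2 ≤ f w - f wstar := by
    have := hmin wp
    linarith [harmijo]
  have hcpos : 0 < 2 * c - 1 := by linarith
  have hGsq : (0:ℝ) ≤ ‖G‖ ^ 2 := sq_nonneg _
  set A := f w - f wstar with hAdef
  have hkey : (2 * c - 1) * η * A ≤ c * (‖w - wstar‖ ^ 2 - ‖wp - wstar‖ ^ 2) := by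
    rw [hexp]
    nlinarith [hI, hA, hη, hc, mul_pos hη (mul_pos (by linarith : (0:ℝ) < c) hη)]
  have hfinal : A ≤ c * (‖w - wstar‖ ^ 2 - ‖wp - wstar‖ ^ 2) / ((2 * c - 1) * η) := by
    rw [le_div_iff₀ (by positivity)]
    linarith [hkey]
  calc A ≤ c * (‖w - wstar‖ ^ 2 - ‖wp - wstar‖ ^ 2) / ((2 * c - 1) * η) := hfinal
    _ = (c / (2 * c - 1)) * (1 / η) * (‖w - wstar‖ ^ 2 - ‖wp - wstar‖ ^ 2) := by
        field_simp
end

section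
/- Let g = ∇f_i for a differentiable f_i : R^d → R satisfying the restricted secant inequality ⟨g(w), w - w*⟩ ≥ μ‖w - w*‖² for all w (with μ > 0), and suppose g is L-Lipschitz. With the extragradient step w' = w - ηg(w), w⁺ = w - ηg(w'), where 0 < η ≤ 1/(4L) and μ ≤ L, it holds that ‖w⁺ - w*‖² ≤ (1 - ημ)‖w - w*‖². -/
set_option maxHeartbeats 400000


open scoped RealInnerProductSpace

/-- Extragradient step on a function satisfying RSI with L-Lipschitz gradient:
if 0 < η ≤ 1/(4L) and μ ≤ L, then ‖w⁺ - w*‖² ≤ (1 - ημ)‖w - w*‖². -/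
theorem armijo_sls_stmt10 {d : ℕ} (f : EuclideanSpace ℝ (Fin d) → ℝ)
    (g : EuclideanSpace ℝ (Fin d) → EuclideanSpace ℝ (Fin d))
    (μ L : ℝ) (hμ : 0 < μ) (hL : 0 < L) (hμL : μ ≤ L)
    (hgrad : ∀ x, HasGradientAt f (g x) x)
    (hlip : ∀ u v, ‖g u - g v‖ ≤ L * ‖u - v‖)
    (wstar : EuclideanSpace ℝ (Fin d))
    (hRSI : ∀ w, ⟪g w, w - wstar⟫ ≥ μ * ‖w - wstar‖ ^ 2)
    (w : EuclideanSpace ℝ (Fin d)) (η : ℝ) (hη : 0 < η) (hηle : η ≤ 1 / (4 * L)) :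
    ‖(w - η • g (w - η • g w)) - wstar‖ ^ 2 ≤ (1 - η * μ) * ‖w - wstar‖ ^ 2 := by
  set u := g w with hu
  set w' := w - η • u with hw'
  set v := g w' with hv
  set a := w - wstar with ha
  have hrw : (w - η • g (w - η • g w)) - wstar = a - η • v := by
    rw [ha, hv, hw', hu]; abel
  rw [hrw]
  have h4 : 4 * L * η ≤ 1 := by
    rw [le_div_iff₀ (by positivity)] at hηle; linarith
  -- abbreviations
  have key1 : ‖a - η • v‖ ^ 2 = ‖a‖ ^ 2 - 2 * η * ⟪v, a⟫ + η ^ 2 * ‖v‖ ^ 2 := by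
    rw [norm_sub_sq_real, real_inner_smul_right, norm_smul, real_inner_comm a v]
    simp [Real.norm_eq_abs, mul_pow, sq_abs]
    ring
  have key2 : ‖v - u‖ ^ 2 = ‖v‖ ^ 2 - 2 * ⟪v, u⟫ + ‖u‖ ^ 2 := by
    rw [norm_sub_sq_real]
  -- Lipschitz bound
  have hlipb : ‖v - u‖ ≤ L * (η * ‖u‖) := by
    have h := hlip w' w
    have : ‖w' - w‖ = η * ‖u‖ := by
      rw [hw']
      simp [norm_smul, abs_of_pos hη]
    rw [this] at h
    exact h
  have hlip2 : ‖v - u‖ ^ 2 ≤ L ^ 2 * η ^ 2 * ‖u‖ ^ 2 := by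
    have h0 : (0:ℝ) ≤ ‖v - u‖ := norm_nonneg _
    nlinarith [norm_nonneg u, mul_nonneg (mul_nonneg hL.le hη.le) (norm_nonneg u)]
  -- RSI at w'
  have hRSI' : ⟪v, a⟫ - η * ⟪v, u⟫ ≥ μ * ‖a - η • u‖ ^ 2 := by
    have := hRSI w'
    have heq : w' - wstar = a - η • u := by rw [hw', ha]; abel
    rw [heq] at this
    have hinner : ⟪v, a - η • u⟫ = ⟪v, a⟫ - η * ⟪v, u⟫ := by
      rw [inner_sub_right, real_inner_smul_right]
    rw [← hinner]
    exact this
  -- Young: ‖a‖² ≤ 2‖a - η•u‖² + 2η²‖u‖²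
  have hyoung : ‖a‖ ^ 2 ≤ 2 * ‖a - η • u‖ ^ 2 + 2 * η ^ 2 * ‖u‖ ^ 2 := by
    have heq : a = (a - η • u) + η • u := by abel
    have hn : ‖a‖ ≤ ‖a - η • u‖ + ‖η • u‖ := by
      conv_lhs => rw [heq]
      exact norm_add_le _ _
    have hs : ‖η • u‖ = η * ‖u‖ := by
      rw [norm_smul, Real.norm_eq_abs, abs_of_pos hη]
    rw [hs] at hn
    nlinarith [norm_nonneg (a - η • u), norm_nonneg a,
      mul_nonneg hη.le (norm_nonneg u), sq_nonneg (‖a - η • u‖ - η * ‖u‖)]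
  have hLη : L * η ≤ 1/4 := by linarith
  have hμη : μ * η ≤ 1/4 := le_trans (by nlinarith) hLη
  have hcoef : η ^ 2 * ‖u‖ ^ 2 * (L ^ 2 * η ^ 2 + 2 * μ * η - 1) ≤ 0 := by
    apply mul_nonpos_of_nonneg_of_nonpos
    · positivity
    · nlinarith [mul_nonneg hL.le hη.le]
  have e1 : 2 * η * (⟪v, a⟫ - η * ⟪v, u⟫) ≥ 2 * η * (μ * ‖a - η • u‖ ^ 2) :=
    mul_le_mul_of_nonneg_left hRSI' (by positivity)
  have e2 : η * μ * ‖a‖ ^ 2 ≤ η * μ * (2 * ‖a - η • u‖ ^ 2 + 2 * η ^ 2 * ‖u‖ ^ 2) :=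
    mul_le_mul_of_nonneg_left hyoung (by positivity)
  have e3 : η ^ 2 * ‖v - u‖ ^ 2 ≤ η ^ 2 * (L ^ 2 * η ^ 2 * ‖u‖ ^ 2) :=
    mul_le_mul_of_nonneg_left hlip2 (by positivity)
  rw [key1]
  nlinarith [e1, e2, e3, key2, hcoef]
end

section
/- Let g : R^d → R^d and suppose the Lipschitz line-search condition ‖g(w - ηg(w)) - g(w)‖ ≤ c‖g(w)‖ holds at w with constants c ∈ (0, 1/√2] and η > 0. Let f be convex, differentiable with gradient g, minimized at w* with g(w*) = 0. Then with the extragradient step w' = w - ηg(w), w⁺ = w - ηg(w'), one has (η/2)(f(w) - f(w*)) ≤ ‖w - w*‖² - ‖w⁺ - w*‖². -/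
open scoped RealInnerProductSpace

lemma grad_conv_ineq {d : ℕ} {f : EuclideanSpace ℝ (Fin d) → ℝ}
    (hconv : ConvexOn ℝ Set.univ f) {x gx : EuclideanSpace ℝ (Fin d)}
    (hg : HasGradientAt f gx x) (y : EuclideanSpace ℝ (Fin d)) :
    f x + ⟪gx, y - x⟫ ≤ f y := by
  rcases eq_or_ne y x with rfl | hne
  · simp
  set φ : ℝ → ℝ := fun t => f (x + t • (y - x)) with hφ
  have hφc : ConvexOn ℝ Set.univ φ := by
    have h := hconv.comp_affineMap (AffineMap.lineMap x y)
    have : (Set.univ : Set ℝ) = (AffineMap.lineMap x y) ⁻¹' Set.univ := by simp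
    rw [this]
    convert h using 1
    iterate 4 rfl
    funext t
    simp [hφ, AffineMap.lineMap_apply]
    congr 1
    module
  have hline : HasDerivAt (fun t : ℝ => x + t • (y - x)) (y - x) 0 := by
    have h1 : HasDerivAt (fun t : ℝ => t • (y - x)) ((1 : ℝ) • (y - x)) 0 :=
      (hasDerivAt_id 0).smul_const (y - x)
    simpa using h1.const_add x
  have hfd : HasFDerivAt f (InnerProductSpace.toDual ℝ _ gx) x := hg
  have hx0 : x + (0 : ℝ) • (y - x) = x := by simp
  have hφd : HasDerivAt φ ⟪gx, y - x⟫ 0 := by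
    have hfd' : HasFDerivAt f (InnerProductSpace.toDual ℝ _ gx)
        (x + (0 : ℝ) • (y - x)) := by rw [hx0]; exact hfd
    have := hfd'.comp_hasDerivAt 0 hline
    simpa [InnerProductSpace.toDual_apply_apply, hφ, Function.comp_def] using this
  have hslope := hφc.le_slope_of_hasDerivAt (Set.mem_univ 0) (Set.mem_univ 1)
    one_pos hφd
  have hs : slope φ 0 1 = f y - f x := by
    simp [slope_def_field, hφ]
  rw [hs] at hslope
  linarith

lemma key_id {d : ℕ} (a u v : EuclideanSpace ℝ (Fin d)) (η : ℝ) :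
    ‖a‖ ^ 2 - ‖a - η • v‖ ^ 2 =
      2 * η * ⟪v, a - η • u⟫ + η ^ 2 * ‖u‖ ^ 2 - η ^ 2 * ‖v - u‖ ^ 2 := by
  simp only [norm_sub_sq_real, inner_sub_right, inner_smul_right, inner_smul_left,
    norm_smul, mul_pow, Real.norm_eq_abs, sq_abs, real_inner_comm a v,
    real_inner_comm u v, real_inner_self_eq_norm_sq]
  ring

/-- SEG with Lipschitz line-search (c ≤ 1/√2) on a convex function f with
minimizer w*: (η/2)(f(w) - f(w*)) ≤ ‖w - w*‖² - ‖w⁺ - w*‖². -/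
theorem armijo_sls_stmt12 {d : ℕ} (f : EuclideanSpace ℝ (Fin d) → ℝ)
    (g : EuclideanSpace ℝ (Fin d) → EuclideanSpace ℝ (Fin d))
    (hgrad : ∀ x, HasGradientAt f (g x) x)
    (hconv : ConvexOn ℝ Set.univ f)
    (wstar : EuclideanSpace ℝ (Fin d))
    (hmin : ∀ w, f wstar ≤ f w) (hstat : g wstar = 0)
    (w : EuclideanSpace ℝ (Fin d)) (η c : ℝ) (hη : 0 < η)
    (hc0 : 0 < c) (hc : c ≤ 1 / Real.sqrt 2)
    (hls : ‖g (w - η • g w) - g w‖ ≤ c * ‖g w‖) :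
    (η / 2) * (f w - f wstar) ≤
      ‖w - wstar‖ ^ 2 - ‖(w - η • g (w - η • g w)) - wstar‖ ^ 2 := by
  set w' := w - η • g w with hw'
  set u := g w with hu
  set v := g w' with hv
  set a := w - wstar with ha
  -- c² ≤ 1/2
  have hsqrt2 : (0:ℝ) < Real.sqrt 2 := Real.sqrt_pos.2 (by norm_num)
  have hc2 : c ^ 2 ≤ 1 / 2 := by
    have h1 : c ^ 2 ≤ (1 / Real.sqrt 2) ^ 2 := by
      apply pow_le_pow_left₀ hc0.le hc
    have h2 : (1 / Real.sqrt 2) ^ 2 = 1 / 2 := by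
      rw [div_pow, Real.sq_sqrt (by norm_num : (2:ℝ) ≥ 0)]
      norm_num
    linarith
  -- Lipschitz bound squared
  have hls2 : ‖v - u‖ ^ 2 ≤ (1 / 2) * ‖u‖ ^ 2 := by
    have h1 : ‖v - u‖ ^ 2 ≤ (c * ‖u‖) ^ 2 := by
      apply pow_le_pow_left₀ (norm_nonneg _) hls
    have h2 : (c * ‖u‖) ^ 2 = c ^ 2 * ‖u‖ ^ 2 := by ring
    nlinarith [sq_nonneg (‖u‖), norm_nonneg u]
  -- convexity at w': ⟪v, w' - wstar⟫ ≥ f w' - f wstar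
  have hcv1 : f w' - f wstar ≤ ⟪v, w' - wstar⟫ := by
    have h := grad_conv_ineq hconv (hgrad w') wstar
    have : ⟪v, wstar - w'⟫ = -⟪v, w' - wstar⟫ := by
      rw [← inner_neg_right]; congr 1; abel
    linarith [h, this ▸ h]
  -- convexity at w: f w ≤ f w' + η ‖u‖²
  have hcv2 : f w ≤ f w' + η * ‖u‖ ^ 2 := by
    have h := grad_conv_ineq hconv (hgrad w) w'
    have hdiff : w' - w = -(η • u) := by rw [hw']; abel
    have : ⟪u, w' - w⟫ = -(η * ‖u‖ ^ 2) := by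
      rw [hdiff, inner_neg_right, inner_smul_right, real_inner_self_eq_norm_sq]
    linarith [this ▸ h]
  -- interpolation: f w' ≥ f wstar
  have hA : 0 ≤ f w' - f wstar := by linarith [hmin w']
  -- key identity
  have hid := key_id a u v η
  have h1 : w - η • v - wstar = a - η • v := by rw [ha]; abel
  have h2 : w' - wstar = a - η • u := by rw [hw', ha]; abel
  rw [h1] at *
  have hinner : f w' - f wstar ≤ ⟪v, a - η • u⟫ := by rw [← h2]; exact hcv1
  have hη2 : 0 < η ^ 2 := by positivity
  nlinarith [hid, hinner, hls2, hcv2, hA, sq_nonneg ‖u‖]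
end

section
/- Let A ∈ R^{m×n}, and consider the bilinear operator updates x⁺ = x - ηA(y + ηAᵀx), y⁺ = y + ηAᵀ(x - ηAy). Then ‖x⁺‖² + ‖y⁺‖² = ‖x‖² + ‖y‖² - η²(xᵀAAᵀx + yᵀAᵀAy) + η⁴(xᵀ(AAᵀ)²x + yᵀ(AᵀA)²y). -/
open Matrix

lemma key_dot {m n : ℕ} (A : Matrix (Fin m) (Fin n) ℝ)
    (a : Fin m → ℝ) (b : Fin n → ℝ) :
    a ⬝ᵥ A.mulVec b = Aᵀ.mulVec a ⬝ᵥ b := by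
  rw [Matrix.dotProduct_mulVec, Matrix.mulVec_transpose]

/-- One-step energy identity for extragradient on the bilinear problem:
‖x⁺‖² + ‖y⁺‖² = ‖x‖² + ‖y‖² - η²(xᵀAAᵀx + yᵀAᵀAy)
              + η⁴(xᵀ(AAᵀ)²x + yᵀ(AᵀA)²y). -/
theorem armijo_sls_stmt13 {m n : ℕ} (A : Matrix (Fin m) (Fin n) ℝ)
    (x : Fin m → ℝ) (y : Fin n → ℝ) (η : ℝ)
    (x' : Fin m → ℝ) (y' : Fin n → ℝ)
    (hx' : x' = x - η • A.mulVec (y + η • Aᵀ.mulVec x))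
    (hy' : y' = y + η • Aᵀ.mulVec (x - η • A.mulVec y)) :
    x' ⬝ᵥ x' + y' ⬝ᵥ y' =
      x ⬝ᵥ x + y ⬝ᵥ y
        - η ^ 2 * (x ⬝ᵥ A.mulVec (Aᵀ.mulVec x) + y ⬝ᵥ Aᵀ.mulVec (A.mulVec y))
        + η ^ 4 * (x ⬝ᵥ A.mulVec (Aᵀ.mulVec (A.mulVec (Aᵀ.mulVec x)))
                  + y ⬝ᵥ Aᵀ.mulVec (A.mulVec (Aᵀ.mulVec (A.mulVec y)))) := by
  set u := Aᵀ.mulVec x with hu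
  set v := A.mulVec y with hv
  have hx2 : x' = x - η • v - (η * η) • A.mulVec u := by
    rw [hx', Matrix.mulVec_add, Matrix.mulVec_smul, smul_add, smul_smul]
    abel
  have hy2 : y' = y + η • u - (η * η) • Aᵀ.mulVec v := by
    rw [hy', Matrix.mulVec_sub, Matrix.mulVec_smul, smul_sub, smul_smul]
    abel
  have h1 : x ⬝ᵥ v = u ⬝ᵥ y := key_dot A x y
  have h2 : x ⬝ᵥ A.mulVec u = u ⬝ᵥ u := key_dot A x u
  have h3 : y ⬝ᵥ Aᵀ.mulVec v = v ⬝ᵥ v := by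
    rw [key_dot Aᵀ y v, Matrix.transpose_transpose]
  have h4 : v ⬝ᵥ A.mulVec u = Aᵀ.mulVec v ⬝ᵥ u := key_dot A v u
  have h5 : x ⬝ᵥ A.mulVec (Aᵀ.mulVec v) = u ⬝ᵥ Aᵀ.mulVec v := key_dot A x (Aᵀ.mulVec v)
  have h6 : x ⬝ᵥ A.mulVec (Aᵀ.mulVec (A.mulVec u)) = A.mulVec u ⬝ᵥ A.mulVec u := by
    rw [key_dot A x, ← hu, key_dot Aᵀ u (A.mulVec u), Matrix.transpose_transpose]
  have h7 : y ⬝ᵥ Aᵀ.mulVec (A.mulVec (Aᵀ.mulVec v)) =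
      Aᵀ.mulVec v ⬝ᵥ Aᵀ.mulVec v := by
    rw [key_dot Aᵀ y, Matrix.transpose_transpose, ← hv, key_dot A v (Aᵀ.mulVec v)]
  subst hx2 hy2
  simp only [dotProduct_sub, sub_dotProduct, dotProduct_add, add_dotProduct,
    dotProduct_smul, smul_dotProduct, smul_eq_mul]
  rw [h2, h3, h6, h7]
  simp only [dotProduct_comm v x, dotProduct_comm (A *ᵥ u) x,
    dotProduct_comm (A *ᵥ u) v, dotProduct_comm (Aᵀ *ᵥ v) y,
    dotProduct_comm y u, dotProduct_comm (Aᵀ *ᵥ v) u, h1, h2, h3, h4, h5]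
  ring
end

section
/- Let A ∈ R^{m×n}, x ∈ R^m, y ∈ R^n, η > 0, and c ∈ (0,1) satisfy η²(xᵀ(AAᵀ)²x + yᵀ(AᵀA)²y) ≤ c²(xᵀAAᵀx + yᵀAᵀAy). Then with x⁺ = x - ηA(y + ηAᵀx) and y⁺ = y + ηAᵀ(x - ηAy), it holds that ‖x⁺‖² + ‖y⁺‖² ≤ ‖x‖² + ‖y‖² - η²(1 - c²)(xᵀAAᵀx + yᵀAᵀAy). -/
open Matrix

private lemma adj_aux {m n : ℕ} (A : Matrix (Fin m) (Fin n) ℝ)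
    (u : Fin m → ℝ) (v : Fin n → ℝ) :
    u ⬝ᵥ A.mulVec v = (Aᵀ.mulVec u) ⬝ᵥ v := by
  rw [Matrix.dotProduct_mulVec, Matrix.mulVec_transpose]

/-- Under the Lipschitz line-search hypothesis, the extragradient step on the
bilinear problem contracts the energy:
‖x⁺‖² + ‖y⁺‖² ≤ ‖x‖² + ‖y‖² - η²(1 - c²)(xᵀAAᵀx + yᵀAᵀAy). -/
theorem armijo_sls_stmt14 {m n : ℕ} (A : Matrix (Fin m) (Fin n) ℝ)
    (x : Fin m → ℝ) (y : Fin n → ℝ) (η c : ℝ)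
    (hη : 0 < η) (hc0 : 0 < c) (hc1 : c < 1)
    (hls : η ^ 2 * (x ⬝ᵥ A.mulVec (Aᵀ.mulVec (A.mulVec (Aᵀ.mulVec x)))
              + y ⬝ᵥ Aᵀ.mulVec (A.mulVec (Aᵀ.mulVec (A.mulVec y)))) ≤
           c ^ 2 * (x ⬝ᵥ A.mulVec (Aᵀ.mulVec x) + y ⬝ᵥ Aᵀ.mulVec (A.mulVec y)))
    (x' : Fin m → ℝ) (y' : Fin n → ℝ)
    (hx' : x' = x - η • A.mulVec (y + η • Aᵀ.mulVec x))
    (hy' : y' = y + η • Aᵀ.mulVec (x - η • A.mulVec y)) :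
    x' ⬝ᵥ x' + y' ⬝ᵥ y' ≤
      x ⬝ᵥ x + y ⬝ᵥ y
        - η ^ 2 * (1 - c ^ 2) *
            (x ⬝ᵥ A.mulVec (Aᵀ.mulVec x) + y ⬝ᵥ Aᵀ.mulVec (A.mulVec y)) := by
  set a := A.mulVec y with ha
  set b := Aᵀ.mulVec x with hb
  set p := A.mulVec b with hp
  set q := Aᵀ.mulVec a with hq
  have hx'' : x' = x - η • a - (η^2) • p := by
    rw [hx', Matrix.mulVec_add, Matrix.mulVec_smul]; module
  have hy'' : y' = y + η • b - (η^2) • q := by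
    rw [hy', Matrix.mulVec_sub, Matrix.mulVec_smul]; module
  -- scalar identities
  have e1 : x ⬝ᵥ a = b ⬝ᵥ y := adj_aux A x y
  have e2 : x ⬝ᵥ p = b ⬝ᵥ b := adj_aux A x b
  have e3 : y ⬝ᵥ q = a ⬝ᵥ a := by
    have := adj_aux Aᵀ y a; simpa [Matrix.transpose_transpose] using this
  have e4 : a ⬝ᵥ p = q ⬝ᵥ b := adj_aux A a b
  have e5 : x ⬝ᵥ A.mulVec (Aᵀ.mulVec p) = p ⬝ᵥ p := by
    rw [adj_aux A x (Aᵀ.mulVec p), ← hb, adj_aux Aᵀ b p]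
    rw [Matrix.transpose_transpose, ← hp, dotProduct_comm]
  have e6 : y ⬝ᵥ Aᵀ.mulVec (A.mulVec q) = q ⬝ᵥ q := by
    have h1 := adj_aux Aᵀ y (A.mulVec q)
    rw [h1, Matrix.transpose_transpose, ← ha, adj_aux A a q, ← hq, dotProduct_comm]
  have hls' : η ^ 2 * (p ⬝ᵥ p + q ⬝ᵥ q) ≤ c ^ 2 * (x ⬝ᵥ p + y ⬝ᵥ q) := by
    rw [← e5, ← e6]; exact hls
  have hXgoal : x' ⬝ᵥ x' =
      x ⬝ᵥ x - 2*η*(x ⬝ᵥ a) - 2*η^2*(x ⬝ᵥ p) + η^2*(a ⬝ᵥ a)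
        + 2*η^3*(a ⬝ᵥ p) + η^4*(p ⬝ᵥ p) := by
    rw [hx'']
    simp only [dotProduct_sub, sub_dotProduct, dotProduct_smul, smul_dotProduct,
      smul_eq_mul]
    rw [dotProduct_comm a x, dotProduct_comm p x, dotProduct_comm p a]
    ring
  have hYgoal : y' ⬝ᵥ y' =
      y ⬝ᵥ y + 2*η*(y ⬝ᵥ b) - 2*η^2*(y ⬝ᵥ q) + η^2*(b ⬝ᵥ b)
        - 2*η^3*(b ⬝ᵥ q) + η^4*(q ⬝ᵥ q) := by
    rw [hy'']
    simp only [dotProduct_sub, sub_dotProduct, dotProduct_add, add_dotProduct,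
      dotProduct_smul, smul_dotProduct, smul_eq_mul]
    rw [dotProduct_comm b y, dotProduct_comm q y, dotProduct_comm q b]
    ring
  have key : η^4*(p ⬝ᵥ p + q ⬝ᵥ q) ≤ η^2*(c^2*(x ⬝ᵥ p + y ⬝ᵥ q)) := by
    nlinarith [hls', sq_nonneg η]
  rw [hXgoal, hYgoal, e1, e3, e4, dotProduct_comm y b, dotProduct_comm b q] at *
  rw [e2] at *
  linarith [key]
end
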